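/- For any N : E → ℤ≥0 and mean-zero functions φ, ψ : V → ℤ, the inequality #{∂r = φ+ψ, ∂b = 0}_N + #{∂r = φ−ψ, ∂b = 0}_N ≥ 2·#{∂r = φ, ∂b = ψ}_N holds, where the sets count two-colored oriented configurations on the multigraph G_N with prescribed red and blue sources. -/

import Mathlib

open Finset

/-- A finite multigraph on vertex set `V`: a finite set of distinguishable
strands (edges), each with an unordered pair of distinct endpoints. -/
structure MG (V : Type) where
  Strand : Type
  [fin : Fintype Strand]
  [dec : DecidableEq Strand]
  ends : Strand → Sym2 V
  noloop : ∀ s, ¬ (ends s).IsDiag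

attribute [instance] MG.fin MG.dec

variable {V : Type} [Fintype V] [DecidableEq V]

/-- An oriented (one-colored) configuration on the multigraph `G`. -/
structure Config (G : MG V) where
  orient : G.Strand → V × V
  compat : ∀ s, Sym2.mk.uncurry (orient s) = G.ends s

/-- A two-colored oriented configuration on the multigraph `G`
(`red s = true` means the strand `s` is red, otherwise it is blue). -/
structure Config2 (G : MG V) where
  orient : G.Strand → V × V
  red : G.Strand → Bool
  compat : ∀ s, Sym2.mk.uncurry (orient s) = G.ends s

/-- The current induced by an oriented configuration. -/
def Config.cur {G : MG V} (ω : Config G) (x y : V) : ℕ :=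
  (univ.filter fun s => ω.orient s = (x, y)).card

/-- The red current of a two-colored configuration. -/
def Config2.redCur {G : MG V} (ω : Config2 G) (x y : V) : ℕ :=
  (univ.filter fun s => ω.orient s = (x, y) ∧ ω.red s = true).card

/-- The blue current of a two-colored configuration. -/
def Config2.blueCur {G : MG V} (ω : Config2 G) (x y : V) : ℕ :=
  (univ.filter fun s => ω.orient s = (x, y) ∧ ω.red s = false).card

/-- The source function of a current. -/
def csrc (n : V → V → ℕ) (x : V) : ℤ :=
  ∑ y, ((n x y : ℤ) - n y x)

/-- The bijection `F`: paint everything red keeping orientations for the first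
component; reverse red strands and paint everything blue for the second. -/
def F {G : MG V} (ω : Config2 G) : Config G × Config G :=
  (⟨ω.orient, ω.compat⟩,
   ⟨fun s => if ω.red s then (ω.orient s).swap else ω.orient s, by
      intro s
      by_cases h : ω.red s <;> simp [h, ← ω.compat s, Function.uncurry, Sym2.eq_swap]⟩)


section Aux
variable {G : MG V}

lemma Config.ext' {a b : Config G} (h : a.orient = b.orient) : a = b := by
  cases a; cases b; cases h; rfl

lemma orient_ne (ω : Config G) (s : G.Strand) : (ω.orient s).1 ≠ (ω.orient s).2 := by
  intro h
  exact G.noloop s (by rw [← ω.compat s]; exact Sym2.mk_isDiag_iff.2 h)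

lemma swap_ne (ω : Config G) (s : G.Strand) : (ω.orient s).swap ≠ ω.orient s := by
  intro h
  exact orient_ne ω s ((Prod.ext_iff.1 h).1).symm

/-- `F` as an equivalence. -/
def FE : Config2 G ≃ Config G × Config G where
  toFun := F
  invFun p := ⟨p.1.orient, fun s => decide (p.2.orient s ≠ p.1.orient s), p.1.compat⟩
  left_inv ω := by
    cases ω with
    | mk o r c =>
      simp only [F]
      congr 1
      funext s
      by_cases h : r s <;> simp [h, swap_ne ⟨o, c⟩ s]
  right_inv p := by
    obtain ⟨ω₁, ω₂⟩ := p
    have key : ∀ s, (if (decide (ω₂.orient s ≠ ω₁.orient s)) = true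
        then (ω₁.orient s).swap else ω₁.orient s) = ω₂.orient s := by
      intro s
      by_cases h : ω₂.orient s = ω₁.orient s
      · simp [h]
      · have hd : decide (ω₂.orient s ≠ ω₁.orient s) = true := decide_eq_true h
        rw [if_pos hd]
        have h2 : s((ω₁.orient s).1, (ω₁.orient s).2) = s((ω₂.orient s).1, (ω₂.orient s).2) := by
          exact (ω₁.compat s).trans (ω₂.compat s).symm
        rw [Sym2.mk_eq_mk_iff] at h2
        rcases h2 with h2 | h2
        · exact absurd h2.symm h
        · rw [h2, Prod.swap_swap]
    refine Prod.ext (Config.ext' rfl) (Config.ext' ?_)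
    funext s
    exact key s

lemma cur_F1 (ω : Config2 G) (x y : V) :
    (F ω).1.cur x y = ω.redCur x y + ω.blueCur x y := by
  classical
  simp only [F, Config.cur, Config2.redCur, Config2.blueCur]
  rw [← Finset.card_filter_add_card_filter_not (p := fun s => ω.red s = true)]
  congr 1
  · erw [Finset.filter_filter]; congr 1
  · erw [Finset.filter_filter]
    congr 1
    apply Finset.filter_congr
    intro s _
    simp

lemma swap_eq_pair {α : Type*} {p : α × α} {x y : α} : p.swap = (x, y) ↔ p = (y, x) := by
  constructor
  · intro hh
    simpa using congrArg Prod.swap hh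
  · intro hh
    rw [hh]
    rfl

lemma cur_F2 (ω : Config2 G) (x y : V) :
    (F ω).2.cur x y = ω.blueCur x y + ω.redCur y x := by
  classical
  simp only [F, Config.cur, Config2.redCur, Config2.blueCur]
  rw [← Finset.card_filter_add_card_filter_not (p := fun s => ω.red s = true),
    add_comm]
  congr 1
  · erw [Finset.filter_filter]
    congr 1
    apply Finset.filter_congr
    intro s _
    by_cases h : ω.red s <;> simp [h]
  · erw [Finset.filter_filter]
    congr 1
    apply Finset.filter_congr
    intro s _
    by_cases h : ω.red s
    · simp only [h, if_true, and_true, true_and]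
      exact swap_eq_pair
    · simp [h]

lemma csrc_add (m n : V → V → ℕ) (x : V) :
    csrc (fun x y => m x y + n x y) x = csrc m x + csrc n x := by
  simp only [csrc]
  rw [← Finset.sum_add_distrib]
  apply Finset.sum_congr rfl
  intro y _
  push_cast
  ring

lemma csrc_transpose (n : V → V → ℕ) (x : V) :
    csrc (fun x y => n y x) x = - csrc n x := by
  have h : ∀ y, ((n y x : ℤ) - n x y) = -(((n x y : ℤ)) - n y x) := fun y => by ring
  simp only [csrc, h, Finset.sum_neg_distrib]

lemma csrc_F1 (ω : Config2 G) (x : V) :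
    csrc (F ω).1.cur x = csrc ω.redCur x + csrc ω.blueCur x := by
  have h : (F ω).1.cur = fun x y => ω.redCur x y + ω.blueCur x y := by
    funext a b; exact cur_F1 ω a b
  rw [h, csrc_add]

lemma csrc_F2 (ω : Config2 G) (x : V) :
    csrc (F ω).2.cur x = csrc ω.blueCur x - csrc ω.redCur x := by
  have h : (F ω).2.cur = fun x y => ω.blueCur x y + (fun x y => ω.redCur y x) x y := by
    funext a b; exact cur_F2 ω a b
  rw [h, csrc_add ω.blueCur (fun x y => ω.redCur y x), csrc_transpose ω.redCur]
  ring

/-- Number of one-colored configurations with given source. -/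
noncomputable def srcCount (G : MG V) (f : V → ℤ) : ℕ :=
  Nat.card {ω : Config G // ∀ x, csrc ω.cur x = f x}

lemma srcCount_congr {f g : V → ℤ} (h : ∀ x, f x = g x) :
    srcCount G f = srcCount G g := by
  have : f = g := funext h
  rw [this]

/-- Orientation reversal. -/
def revC (ω : Config G) : Config G :=
  ⟨fun s => (ω.orient s).swap, fun s => by rw [← ω.compat]; simp [Function.uncurry, Sym2.eq_swap]⟩

lemma revC_inv : Function.Involutive (revC (G := G)) := fun ω =>
  Config.ext' (by funext s; simp [revC])

lemma cur_revC (ω : Config G) (x y : V) : (revC ω).cur x y = ω.cur y x := by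
  simp only [revC, Config.cur]
  congr 1
  apply Finset.filter_congr
  intro s _
  simp [Prod.ext_iff, and_comm]

lemma csrc_revC (ω : Config G) (x : V) : csrc (revC ω).cur x = - csrc ω.cur x := by
  have h : (revC ω).cur = fun x y => ω.cur y x := by
    funext a b; exact cur_revC ω a b
  rw [h, csrc_transpose]

lemma srcCount_neg (f : V → ℤ) : srcCount G (fun x => - f x) = srcCount G f :=
  Nat.card_congr
    { toFun := fun ω => ⟨revC ω.1, fun x => by rw [csrc_revC, ω.2 x]; ring⟩
      invFun := fun ω => ⟨revC ω.1, fun x => by rw [csrc_revC, ω.2 x]⟩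
      left_inv := fun ω => Subtype.ext (revC_inv ω.1)
      right_inv := fun ω => Subtype.ext (revC_inv ω.1) }

lemma count_eq (G : MG V) (f g : V → ℤ) :
    Nat.card {ω : Config2 G //
        (∀ x, csrc ω.redCur x = f x) ∧ (∀ x, csrc ω.blueCur x = g x)} =
      srcCount G (fun x => f x + g x) * srcCount G (fun x => g x - f x) := by
  rw [srcCount, srcCount, ← Nat.card_prod]
  apply Nat.card_congr
  refine (FE.subtypeEquiv (fun ω => ?_)).trans (Equiv.subtypeProdEquivProd)
  constructor
  · rintro ⟨hr, hb⟩
    constructor <;> intro x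
    · show csrc (F ω).1.cur x = _
      rw [csrc_F1, hr x, hb x]
    · show csrc (F ω).2.cur x = _
      rw [csrc_F2, hr x, hb x]
  · rintro ⟨h1, h2⟩
    constructor <;> intro x
    · have a : csrc (F ω).1.cur x = f x + g x := h1 x
      have b : csrc (F ω).2.cur x = g x - f x := h2 x
      rw [csrc_F1] at a
      rw [csrc_F2] at b
      omega
    · have a : csrc (F ω).1.cur x = f x + g x := h1 x
      have b : csrc (F ω).2.cur x = g x - f x := h2 x
      rw [csrc_F1] at a
      rw [csrc_F2] at b
      omega

end Aux

/-- The combinatorial form of Ginibre's inequality: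
`#{∂r = φ+ψ, ∂b = 0}_N + #{∂r = φ−ψ, ∂b = 0}_N ≥ 2·#{∂r = φ, ∂b = ψ}_N`. -/
theorem card_ineq (G : MG V) (φ ψ : V → ℤ)
    (hφ : ∑ v, φ v = 0) (hψ : ∑ v, ψ v = 0) :
    Nat.card {ω : Config2 G //
        (∀ x, csrc ω.redCur x = φ x + ψ x) ∧ (∀ x, csrc ω.blueCur x = 0)} +
      Nat.card {ω : Config2 G //
        (∀ x, csrc ω.redCur x = φ x - ψ x) ∧ (∀ x, csrc ω.blueCur x = 0)} ≥
      2 * Nat.card {ω : Config2 G //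
        (∀ x, csrc ω.redCur x = φ x) ∧ (∀ x, csrc ω.blueCur x = ψ x)} := by
  have h1 := count_eq G (fun x => φ x + ψ x) (fun _ => 0)
  have h2 := count_eq G (fun x => φ x - ψ x) (fun _ => 0)
  have h3 := count_eq G φ ψ
  rw [h1, h2, h3]
  rw [srcCount_congr (g := fun x => φ x + ψ x) (fun x => by ring),
    srcCount_congr (f := fun x => (0 : ℤ) - (φ x + ψ x)) (g := fun x => -(φ x + ψ x)) (fun x => by ring),
    srcCount_neg,
    srcCount_congr (f := fun x => φ x - ψ x + 0) (g := fun x => -(ψ x - φ x)) (fun x => by ring),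
    srcCount_neg,
    srcCount_congr (f := fun x => (0 : ℤ) - (φ x - ψ x)) (g := fun x => ψ x - φ x) (fun x => by ring)]
  nlinarith [sq_nonneg ((srcCount G (fun x => φ x + ψ x) : ℤ) - srcCount G (fun x => ψ x - φ x)),
    Nat.zero_le (srcCount G (fun x => φ x + ψ x)), Nat.zero_le (srcCount G (fun x => ψ x - φ x))]
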